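/- Let V be a set, E ⊆ V × V a relation, and let Ē be the equivalence relation generated by E, constructed as ⋃ᵢ Eᵢ with E₀ = E ∪ E⁻¹ ∪ Δ and Eᵢ = Eᵢ₋₁ ∘ Eᵢ₋₁. Suppose there is a natural number d ≥ 2 such that for every v ∈ V the fiber π₁⁻¹(v) = {(v,w) ∈ Ē} has cardinality at most d. Then Ē = E_{d-2}. -/

import Mathlib

/-- The inductive sequence of relations: `relSeq E 0 = E ∪ E⁻¹ ∪ Δ` and
`relSeq E (i+1) = relSeq E i ∘ relSeq E i` (composition of relations). -/
def relSeq {V : Type*} (E : V → V → Prop) : ℕ → V → V → Prop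
  | 0 => fun a b => E a b ∨ E b a ∨ a = b
  | (n + 1) => fun a b => ∃ w, relSeq E n a w ∧ relSeq E n w b

/-- Iterated composition of a relation. -/
def iterRel {V : Type*} (R : V → V → Prop) : ℕ → V → V → Prop
  | 0 => fun a b => a = b
  | (n + 1) => fun a b => ∃ w, R a w ∧ iterRel R n w b

lemma iterRel_add {V : Type*} (R : V → V → Prop) (m n : ℕ) (a b : V) :
    iterRel R (m + n) a b ↔ ∃ w, iterRel R m a w ∧ iterRel R n w b := by
  induction m generalizing a with
  | zero =>
    simp [iterRel]
  | succ k ih =>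
    constructor
    · intro h
      rw [show k + 1 + n = (k + n) + 1 by omega] at h
      obtain ⟨w, hw, h⟩ := h
      obtain ⟨u, hu1, hu2⟩ := (ih (a := w)).mp h
      exact ⟨u, ⟨w, hw, hu1⟩, hu2⟩
    · rintro ⟨u, ⟨w, hw, hw2⟩, hu⟩
      rw [show k + 1 + n = (k + n) + 1 by omega]
      exact ⟨w, hw, (ih (a := w)).mpr ⟨u, hw2, hu⟩⟩

lemma iterRel_mono {V : Type*} (R : V → V → Prop) (hR : ∀ a, R a a) {m n : ℕ}
    (h : m ≤ n) {a b : V} (hab : iterRel R m a b) : iterRel R n a b := by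
  induction n with
  | zero => simpa [Nat.le_zero.mp h] using hab
  | succ k ih =>
    rcases Nat.lt_or_ge m (k+1) with h' | h'
    · exact ⟨a, hR a, ih (Nat.lt_succ_iff.mp h')⟩
    · have : m = k + 1 := le_antisymm h h'
      subst this
      exact hab

lemma relSeq_eq_iterRel {V : Type*} (E : V → V → Prop) (n : ℕ) :
    relSeq E n = iterRel (fun a b => E a b ∨ E b a ∨ a = b) (2 ^ n) := by
  induction n with
  | zero =>
    funext a b
    simp [relSeq, iterRel, pow_zero]
  | succ k ih =>
    funext a b
    rw [pow_succ, mul_two]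
    simp only [relSeq, ih, iterRel_add]

theorem stmt1 {V : Type*} (E : V → V → Prop) (d : ℕ) (hd : 2 ≤ d)
    (hfin : ∀ v : V, {w | ∃ i, relSeq E i v w}.Finite)
    (hcard : ∀ v : V, {w | ∃ i, relSeq E i v w}.ncard ≤ d) :
    (fun a b => ∃ i, relSeq E i a b) = relSeq E (d - 2) := by
  set S : V → V → Prop := fun a b => E a b ∨ E b a ∨ a = b with hS
  have hSrefl : ∀ a, S a a := fun a => Or.inr (Or.inr rfl)
  funext a b
  apply propext
  constructor
  · rintro ⟨i, hi⟩
    rw [relSeq_eq_iterRel] at hi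
    set B : ℕ → Set V := fun r => {w | iterRel S r a w} with hB
    have hBC : ∀ r, B r ⊆ {w | ∃ j, relSeq E j a w} := by
      intro r w hw
      exact ⟨r, by
        rw [relSeq_eq_iterRel]
        exact iterRel_mono S hSrefl (Nat.le_of_lt (Nat.lt_two_pow_self (n := r))) hw⟩
    have hBfin : ∀ r, (B r).Finite := fun r => (hfin a).subset (hBC r)
    have hmono : ∀ {m n : ℕ}, m ≤ n → B m ⊆ B n :=
      fun h w hw => iterRel_mono S hSrefl h hw
    have hgrow : ∀ r, (∀ s < r, B s ≠ B (s + 1)) → r + 1 ≤ (B r).ncard := by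
      intro r
      induction r with
      | zero =>
        intro _
        have h0 : B 0 = {a} := by
          ext w; simp only [hB, Set.mem_setOf_eq, Set.mem_singleton_iff]
          exact ⟨fun h => h.symm, fun h => h.symm⟩
        rw [h0, Set.ncard_singleton]
      | succ k ih =>
        intro h
        have h1 := ih (fun s hs => h s (Nat.lt_succ_of_lt hs))
        have hss : B k ⊂ B (k + 1) :=
          (hmono (Nat.le_succ k)).ssubset_of_ne (h k (Nat.lt_succ_self k))
        have h2 := Set.ncard_lt_ncard hss (hBfin (k + 1))
        omega
    have hex : ∃ s < d, B s = B (s + 1) := by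
      by_contra hc
      push_neg at hc
      have h1 := hgrow d (fun s hs => hc s hs)
      have h2 := Set.ncard_le_ncard (hBC d) (hfin a)
      have h3 := hcard a
      omega
    obtain ⟨s, hsd, hstab⟩ := hex
    have hstable : ∀ t, B (s + t) = B s := by
      intro t
      induction t with
      | zero => rfl
      | succ k ih =>
        apply Set.Subset.antisymm _ (hmono (Nat.le_add_right s (k + 1)))
        intro c hc
        have hc' : iterRel S (s + k + 1) a c := by
          have : s + (k + 1) = s + k + 1 := by omega
          rw [this] at hc; exact hc
        obtain ⟨w, hw, hwb⟩ := (iterRel_add S (s + k) 1 a c).mp hc'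
        obtain ⟨u, hSu, h0⟩ := hwb
        have h0' : u = c := h0
        rw [h0'] at hSu
        have hwB : w ∈ B s := by rw [← ih]; exact hw
        have : c ∈ B (s + 1) :=
          (iterRel_add S s 1 a c).mpr ⟨w, hwB, ⟨c, hSu, rfl⟩⟩
        rw [← hstab] at this
        exact this
    have hbN : b ∈ B (max (2 ^ i) s) := hmono (le_max_left _ _) hi
    have hbS : b ∈ B s := by
      have := hstable (max (2 ^ i) s - s)
      rw [show s + (max (2 ^ i) s - s) = max (2 ^ i) s by omega] at this
      rw [← this]; exact hbN
    have hsle : s ≤ 2 ^ (d - 2) := by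
      have h1 : d - 2 < 2 ^ (d - 2) := Nat.lt_two_pow_self (n := d - 2)
      omega
    rw [relSeq_eq_iterRel]
    exact hmono hsle hbS
  · exact fun h => ⟨d - 2, h⟩
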